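/- For all natural numbers k, the double sum over pairs (s,t) with 0 ≤ s,t ≤ k and s+t even of C(k,s)·C(k,t)·[(s+t)! / (((s+t)/2)! · 2^{(s+t)/2})]·[(2k−s−t)! / ((k−(s+t)/2)! · 2^{k−(s+t)/2})] equals (2k)!/k!. -/

import Mathlib

open Finset

private lemma vandermonde_filtered (k m : ℕ) :
    (∑ p ∈ (range (k + 1) ×ˢ range (k + 1)).filter (fun p => p.1 + p.2 = m),
      ((k.choose p.1 : ℚ) * (k.choose p.2))) = ((2 * k).choose m : ℚ) := by
  have h : (range (k + 1) ×ˢ range (k + 1)).filter (fun p => p.1 + p.2 = m)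
      = (antidiagonal m).filter (fun p => p.1 ≤ k ∧ p.2 ≤ k) := by
    ext p
    simp only [mem_filter, mem_product, mem_range, HasAntidiagonal.mem_antidiagonal, Nat.lt_succ_iff]
    tauto
  rw [h]
  have hv : ((2 * k).choose m : ℕ) = ∑ p ∈ antidiagonal m, k.choose p.1 * k.choose p.2 := by
    rw [two_mul]; exact Nat.add_choose_eq k k m
  rw [sum_filter]
  push_cast [hv]
  apply Finset.sum_congr rfl
  intro p hp
  by_cases h1 : p.1 ≤ k
  · by_cases h2 : p.2 ≤ k
    · simp [h1, h2]
    · simp [Nat.choose_eq_zero_of_lt (lt_of_not_ge h2)]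
  · simp [Nat.choose_eq_zero_of_lt (lt_of_not_ge h1)]

private lemma even_sum_reindex (n : ℕ) (g : ℕ → ℚ) :
    (∑ m ∈ range (2 * n + 1), if Even m then g m else 0)
      = ∑ j ∈ range (n + 1), g (2 * j) := by
  induction n with
  | zero => simp
  | succ n ih =>
      have h1 : 2 * (n + 1) + 1 = (2 * n + 1) + 1 + 1 := by ring
      have ho : ¬ Even (2 * n + 1) := by simp [Nat.even_add_one]
      have he : Even (2 * n + 1 + 1) := by exact ⟨n + 1, by ring⟩
      have h2 : 2 * n + 1 + 1 = 2 * (n + 1) := by ring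
      rw [h1, Finset.sum_range_succ, Finset.sum_range_succ, ih, if_neg ho, if_pos he,
        h2, Finset.sum_range_succ _ (n + 1)]
      ring

open Finset in
/-- The dimension count for `End_{𝔰𝔬_p⊕𝔰𝔬_q}(V^{⊗k})`:
`Σ_{0≤s,t≤k, s+t even} C(k,s)·C(k,t)·[(s+t)!/(((s+t)/2)!·2^{(s+t)/2})]`
`·[(2k−s−t)!/((k−(s+t)/2)!·2^{k−(s+t)/2})] = (2k)!/k!` (computed in `ℚ`). -/
theorem so_endomorphism_dimension_sum (k : ℕ) :
    (∑ s ∈ range (k + 1), ∑ t ∈ range (k + 1),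
      if Even (s + t) then
        (k.choose s : ℚ) * (k.choose t) *
          ((Nat.factorial (s + t) : ℚ) /
            ((Nat.factorial ((s + t) / 2)) * 2 ^ ((s + t) / 2))) *
          ((Nat.factorial (2 * k - (s + t)) : ℚ) /
            ((Nat.factorial (k - (s + t) / 2)) * 2 ^ (k - (s + t) / 2)))
      else 0)
    = (Nat.factorial (2 * k) : ℚ) / Nat.factorial k := by
  -- weight function depending only on m = s + t
  set w : ℕ → ℚ := fun m =>
    if Even m then
      (Nat.factorial m * Nat.factorial (2 * k - m)) /
        (Nat.factorial (m / 2) * Nat.factorial (k - m / 2) * 2 ^ k)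
    else 0 with hw
  -- Step 1: rewrite each summand as choose * choose * w (s+t)
  have hterm : ∀ s ∈ range (k + 1), ∀ t ∈ range (k + 1),
      (if Even (s + t) then
        (k.choose s : ℚ) * (k.choose t) *
          ((Nat.factorial (s + t) : ℚ) /
            ((Nat.factorial ((s + t) / 2)) * 2 ^ ((s + t) / 2))) *
          ((Nat.factorial (2 * k - (s + t)) : ℚ) /
            ((Nat.factorial (k - (s + t) / 2)) * 2 ^ (k - (s + t) / 2)))
      else 0) = (k.choose s : ℚ) * (k.choose t) * w (s + t) := by
    intro s hs t ht
    rw [mem_range, Nat.lt_succ_iff] at hs ht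
    by_cases he : Even (s + t)
    · rw [if_pos he, hw]; simp only [if_pos he]
      have hj : (s + t) / 2 ≤ k := by omega
      have hpow : (2 : ℚ) ^ ((s + t) / 2) * 2 ^ (k - (s + t) / 2) = 2 ^ k := by
        rw [← pow_add, Nat.add_sub_cancel' hj]
      have hden : ((Nat.factorial ((s + t) / 2) : ℚ) * 2 ^ ((s + t) / 2)) *
          ((Nat.factorial (k - (s + t) / 2) : ℚ) * 2 ^ (k - (s + t) / 2))
          = (Nat.factorial ((s + t) / 2) : ℚ) * Nat.factorial (k - (s + t) / 2) * 2 ^ k := by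
        rw [← hpow]; ring
      rw [mul_assoc, div_mul_div_comm, hden]
    · rw [if_neg he, hw]; simp [he]
  rw [Finset.sum_congr rfl (fun s hs => Finset.sum_congr rfl (fun t ht => hterm s hs t ht))]
  -- Step 2: turn double sum into sum over product, then fiber over m = s + t
  rw [← Finset.sum_product']
  rw [← Finset.sum_fiberwise_of_maps_to (g := fun p : ℕ × ℕ => p.1 + p.2)
      (t := range (2 * k + 1))
      (fun p hp => by
        rw [mem_product, mem_range, mem_range] at hp
        rw [mem_range]
        show p.1 + p.2 < 2 * k + 1
        omega)]
  have hfib : ∀ m ∈ range (2 * k + 1),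
      (∑ p ∈ (range (k + 1) ×ˢ range (k + 1)).filter (fun p => p.1 + p.2 = m),
        (k.choose p.1 : ℚ) * (k.choose p.2) * w (p.1 + p.2))
      = ((2 * k).choose m : ℚ) * w m := by
    intro m hm
    rw [← vandermonde_filtered k m, Finset.sum_mul]
    apply Finset.sum_congr rfl
    intro p hp
    rw [mem_filter] at hp
    rw [hp.2]
  rw [Finset.sum_congr rfl hfib]
  -- Step 3: restrict to even m via reindexing m = 2j
  have hsplit : ∀ m : ℕ, ((2 * k).choose m : ℚ) * w m
      = if Even m then ((2 * k).choose m : ℚ) *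
          ((Nat.factorial m * Nat.factorial (2 * k - m)) /
            (Nat.factorial (m / 2) * Nat.factorial (k - m / 2) * 2 ^ k)) else 0 := by
    intro m
    rw [hw]
    by_cases he : Even m <;> simp [he]
  rw [Finset.sum_congr rfl (fun m _ => hsplit m), even_sum_reindex]
  -- Step 4: evaluate each term at m = 2j
  have hterm2 : ∀ j ∈ range (k + 1),
      ((2 * k).choose (2 * j) : ℚ) *
        ((Nat.factorial (2 * j) * Nat.factorial (2 * k - 2 * j)) /
          (Nat.factorial ((2 * j) / 2) * Nat.factorial (k - (2 * j) / 2) * 2 ^ k))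
      = (Nat.factorial (2 * k) : ℚ) / (Nat.factorial k * 2 ^ k) * (k.choose j) := by
    intro j hj
    rw [mem_range, Nat.lt_succ_iff] at hj
    have h2j : 2 * j ≤ 2 * k := by omega
    have hfac : ((2 * k).choose (2 * j) : ℚ) * Nat.factorial (2 * j) *
        Nat.factorial (2 * k - 2 * j) = Nat.factorial (2 * k) := by
      exact_mod_cast congrArg (Nat.cast : ℕ → ℚ)
        (Nat.choose_mul_factorial_mul_factorial h2j)
    have hfac2 : (k.choose j : ℚ) * Nat.factorial j * Nat.factorial (k - j)
        = Nat.factorial k := by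
      exact_mod_cast congrArg (Nat.cast : ℕ → ℚ)
        (Nat.choose_mul_factorial_mul_factorial hj)
    have hd : (2 * j) / 2 = j := by omega
    rw [hd]
    have hne : (Nat.factorial j : ℚ) ≠ 0 := by positivity
    have hne2 : (Nat.factorial (k - j) : ℚ) ≠ 0 := by positivity
    have hne3 : (Nat.factorial k : ℚ) ≠ 0 := by positivity
    have hne4 : ((2:ℚ) ^ k) ≠ 0 := by positivity
    have e1 : ((2 * k).choose (2 * j) : ℚ) *
        ((Nat.factorial (2 * j) * Nat.factorial (2 * k - 2 * j)) /
          (Nat.factorial j * Nat.factorial (k - j) * 2 ^ k))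
        = (Nat.factorial (2 * k) : ℚ) /
          (Nat.factorial j * Nat.factorial (k - j) * 2 ^ k) := by
      rw [mul_div_assoc', ← mul_assoc, hfac]
    rw [e1, div_mul_eq_mul_div, div_eq_div_iff (by positivity) (by positivity)]
    linear_combination (-(Nat.factorial (2 * k) : ℚ)) * 2 ^ k * hfac2
  rw [Finset.sum_congr rfl hterm2, ← Finset.mul_sum]
  have hc : (∑ j ∈ range (k + 1), (k.choose j : ℚ)) = 2 ^ k := by
    exact_mod_cast congrArg (Nat.cast : ℕ → ℚ) (Nat.sum_range_choose k)
  rw [hc]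
  have hne3 : (Nat.factorial k : ℚ) ≠ 0 := by positivity
  have hne4 : ((2:ℚ) ^ k) ≠ 0 := by positivity
  field_simp
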